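/- Let ι₊ : D̃₊ ⊆ H₊ → H₀ be the (densely defined) identity embedding, where D̃₊ is dense in both the Hilbert spaces H₊ (w.r.t. ‖·‖₊) and H₀ (w.r.t. ‖·‖₀). Then the adjoint relation ι₊* is single-valued with trivial kernel, its domain equals D₋ := {g ∈ H₀ : sup_{f∈D̃₊} |⟨g,f⟩₀|/‖f‖₊ < ∞}, and ι₊* : D₋ → H₊ is isometric with respect to ‖·‖₋. -/

import Mathlib

open Filter Topology
open scoped ComplexInnerProductSpace

noncomputable section

/-- `(u, v)` belongs to the adjoint relation of the (identity) embedding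
`ι₊ : D̃₊ ⊆ H₊ → H₀`, i.e. `⟨u, ι₊ f⟩₀ = ⟨v, f⟩₊` for all `f` in the domain. -/
def InAdjRel {Hp H₀ : Type*}
    [NormedAddCommGroup Hp] [InnerProductSpace ℂ Hp]
    [NormedAddCommGroup H₀] [InnerProductSpace ℂ H₀]
    (T : Hp →ₗ.[ℂ] H₀) (u : H₀) (v : Hp) : Prop :=
  ∀ f : T.domain, ⟪u, T f⟫ = ⟪v, (f : Hp)⟫

/-- For the densely defined identity embedding `ι₊ : D̃₊ ⊆ H₊ → H₀` (with
`D̃₊` dense in both `H₊` and `H₀`), the adjoint relation `ι₊*` is single-valued with trivial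
kernel, its domain is exactly `D₋ = {g : sup_f |⟨g,f⟩₀|/‖f‖₊ < ∞}`, and `ι₊* : D₋ → H₊` is
isometric with respect to `‖·‖₋`. -/
theorem stmt7 {Hp H₀ : Type*}
    [NormedAddCommGroup Hp] [InnerProductSpace ℂ Hp] [CompleteSpace Hp]
    [NormedAddCommGroup H₀] [InnerProductSpace ℂ H₀] [CompleteSpace H₀]
    (T : Hp →ₗ.[ℂ] H₀)
    (hdom : Dense (T.domain : Set Hp))
    (hran : Dense (Set.range fun f : T.domain => T f)) :
    -- `ι₊*` is single-valued:
    (∀ v : Hp, InAdjRel T 0 v → v = 0) ∧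
    -- `ker ι₊* = {0}`:
    (∀ u : H₀, InAdjRel T u 0 → u = 0) ∧
    -- `dom ι₊* = D₋`:
    (∀ u : H₀, (∃ v : Hp, InAdjRel T u v) ↔
      ∃ C : ℝ, 0 ≤ C ∧ ∀ f : T.domain, ‖⟪u, T f⟫‖ ≤ C * ‖(f : Hp)‖) ∧
    -- `ι₊*` is isometric w.r.t. `‖·‖₋`:
    (∀ (u : H₀) (v : Hp), InAdjRel T u v →
      ‖v‖ = sInf {C : ℝ | 0 ≤ C ∧ ∀ f : T.domain, ‖⟪u, T f⟫‖ ≤ C * ‖(f : Hp)‖}) := by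
  -- auxiliary: a bound on the dense domain extends to all of `Hp`
  have key : ∀ (v : Hp) (C : ℝ), (∀ f : T.domain, ‖⟪v, (f : Hp)⟫‖ ≤ C * ‖(f : Hp)‖) →
      ∀ x : Hp, ‖⟪v, x⟫‖ ≤ C * ‖x‖ := by
    intro v C h x
    have hclosed : IsClosed {x : Hp | ‖⟪v, x⟫‖ ≤ C * ‖x‖} :=
      isClosed_le ((continuous_const.inner continuous_id).norm)
        (continuous_const.mul continuous_norm)
    have hsub : (T.domain : Set Hp) ⊆ {x : Hp | ‖⟪v, x⟫‖ ≤ C * ‖x‖} := by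
      rintro y hy
      exact h ⟨y, hy⟩
    exact hclosed.closure_subset ((closure_mono hsub) (hdom x))
  refine ⟨?_, ?_, ?_, ?_⟩
  · -- single-valued
    intro v hv
    refine hdom.eq_zero_of_inner_left ℂ fun f hf => ?_
    rw [← hv ⟨f, hf⟩, inner_zero_left]
  · -- trivial kernel
    intro u hu
    have hclosed : IsClosed {y : H₀ | ⟪u, y⟫ = (0 : ℂ)} :=
      isClosed_eq (continuous_const.inner continuous_id) continuous_const
    have hsub : Set.range (fun f : T.domain => T f) ⊆ {y : H₀ | ⟪u, y⟫ = (0 : ℂ)} := by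
      rintro _ ⟨f, rfl⟩
      simpa using hu f
    have : ⟪u, u⟫ = (0 : ℂ) := hclosed.closure_subset ((closure_mono hsub) (hran u))
    exact inner_self_eq_zero.mp this
  · -- domain characterization
    intro u
    constructor
    · rintro ⟨v, hv⟩
      refine ⟨‖v‖, norm_nonneg v, fun f => ?_⟩
      rw [hv f]
      exact norm_inner_le_norm v (f : Hp)
    · rintro ⟨C, hC0, hC⟩
      have hcont : Continuous ((innerₛₗ ℂ u).comp T.toFun) :=
        AddMonoidHomClass.continuous_of_bound ((innerₛₗ ℂ u).comp T.toFun) C fun f => hC f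
      refine ⟨LinearPMap.adjointAux hdom ⟨u, hcont⟩, fun f => ?_⟩
      exact (LinearPMap.adjointAux_inner hdom ⟨u, hcont⟩ f).symm
  · -- isometry
    intro u v hv
    have hmem : ‖v‖ ∈ {C : ℝ | 0 ≤ C ∧ ∀ f : T.domain, ‖⟪u, T f⟫‖ ≤ C * ‖(f : Hp)‖} := by
      refine ⟨norm_nonneg v, fun f => ?_⟩
      rw [hv f]
      exact norm_inner_le_norm v (f : Hp)
    have hlb : ∀ C ∈ {C : ℝ | 0 ≤ C ∧ ∀ f : T.domain, ‖⟪u, T f⟫‖ ≤ C * ‖(f : Hp)‖},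
        ‖v‖ ≤ C := by
      rintro C ⟨hC0, hC⟩
      have hall := key v C (fun f => by rw [← hv f]; exact hC f)
      rcases eq_or_ne v 0 with rfl | hne
      · simpa using hC0
      · have h2 := hall v
        rw [inner_self_eq_norm_sq_to_K] at h2
        simp only [norm_pow, Complex.norm_real, norm_norm, sq] at h2
        have hvpos : 0 < ‖v‖ := norm_pos_iff.mpr hne
        have h2' : ‖v‖ * ‖v‖ ≤ C * ‖v‖ := by
          simpa [norm_mul] using h2
        exact le_of_mul_le_mul_right h2' hvpos
    refine le_antisymm (le_csInf ⟨‖v‖, hmem⟩ hlb) (csInf_le ⟨0, fun C hC => hC.1⟩ hmem)
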